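/- arXiv:2011.00322 — 4 statements merged into one kernel-verified Lean document; each statement's English description precedes it below -/
import Mathlib

section
/- Let $p$ be an odd prime, $H = C_p \rtimes_{\Phi} D$ a semidirect product with $D$ finite, and suppose $(a,\alpha)$, $(b,\beta)$, and their product are three pairwise commuting involutions of $H$ with $a \neq 0$ and $b \neq 0$. Then $a = b$ and the product equals $(0, \alpha\beta)$, where $\Phi(\alpha\beta)$ is the trivial automorphism. -/
lemma addAut_zmod_eq_mul (p : ℕ) [NeZero p] (f : AddAut (ZMod p)) (x : ZMod p) :
    f x = x * f 1 := by
  have h : x = x.val • (1 : ZMod p) := by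
    rw [nsmul_eq_mul, ZMod.natCast_val, ZMod.cast_id, mul_one]
  rw [h, map_nsmul, nsmul_eq_mul, ZMod.natCast_val, ZMod.cast_id, ← h]

/-- In `H = C_p ⋊_Φ D` (`p` odd prime, multiplication
`(a,α)(b,β) = (a + Φ(α)(b), αβ)`), if `(a,α)`, `(b,β)` and their product are three
pairwise commuting involutions with `a ≠ 0` and `b ≠ 0`, then `a = b`, the product is
`(0, αβ)`, and `Φ(αβ)` is trivial. -/
theorem stmt_4 (p : ℕ) [Fact p.Prime] (hp : Odd p)
    (D : Type*) [Group D] [Finite D] (Φ : D →* Multiplicative (AddAut (ZMod p)))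
    (a b : ZMod p) (α β : D) (ha : a ≠ 0) (hb : b ≠ 0)
    -- `(a,α)` is an involution
    (hα : α ^ 2 = 1) (hinva : a + Φ α a = 0)
    -- `(b,β)` is an involution
    (hβ : β ^ 2 = 1) (hinvb : b + Φ β b = 0)
    -- the product `(a + Φ(α)(b), αβ)` is an involution
    (hαβ : (α * β) ^ 2 = 1)
    (hinvab : (a + Φ α b) + Φ (α * β) (a + Φ α b) = 0)
    -- `(a,α)` and `(b,β)` commute
    (hcomm1 : a + Φ α b = b + Φ β a) (hcomm2 : α * β = β * α) :
    a = b ∧ a + Φ α b = 0 ∧ Φ (α * β) = 1 := by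
  have hpodd : (2 : ZMod p) ≠ 0 := by
    intro h2
    have h2' : ((2 : ℕ) : ZMod p) = 0 := by exact_mod_cast h2
    have hdvd : p ∣ 2 := (ZMod.natCast_eq_zero_iff 2 p).mp h2'
    have hpe : p = 2 := (Nat.prime_dvd_prime_iff_eq Fact.out Nat.prime_two).mp hdvd
    rw [hpe] at hp
    exact (Nat.not_odd_iff_even.mpr (by decide)) hp
  have key : ∀ (γ : D) (c : ZMod p), c ≠ 0 → c + Φ γ c = 0 → Φ γ 1 = -1 := by
    intro γ c hc h
    rw [addAut_zmod_eq_mul p (Multiplicative.toAdd (Φ γ)) c] at h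
    have h1 : c * (1 + Φ γ 1) = 0 := by ring_nf; linear_combination h
    rcases mul_eq_zero.mp h1 with h' | h'
    · exact absurd h' hc
    · linear_combination h'
  have hca : Φ α 1 = -1 := key α a ha hinva
  have hcb : Φ β 1 = -1 := key β b hb hinvb
  have hcab : Φ (α * β) 1 = 1 := by
    rw [map_mul]
    show Φ α (Φ β 1) = 1
    rw [hcb, addAut_zmod_eq_mul p (Multiplicative.toAdd (Φ α)) (-1), hca]; ring
  have hΦab : Φ (α * β) = 1 := by
    ext x
    rw [addAut_zmod_eq_mul p (Multiplicative.toAdd (Φ (α * β))) x, hcab, mul_one]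
    rfl
  have hΦαb : Φ α b = -b := by
    rw [addAut_zmod_eq_mul p (Multiplicative.toAdd (Φ α)) b, hca]; ring
  rw [hΦab] at hinvab
  have hinvab' : (a + Φ α b) + (a + Φ α b) = 0 := hinvab
  rw [hΦαb] at hinvab'
  have h2ab : (2 : ZMod p) * (a - b) = 0 := by linear_combination hinvab'
  have hab : a = b := by
    rcases mul_eq_zero.mp h2ab with h | h
    · exact absurd h hpodd
    · linear_combination h
  exact ⟨hab, by rw [hΦαb, hab]; ring, hΦab⟩
end

section
/- Let $H$ be a group of order $60$ that is generated by involutions and contains a subgroup isomorphic to the dihedral group of order $6$. If the Sylow $5$-subgroup of $H$ is not normal, then $H \cong A_5$. -/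
open Subgroup Equiv

section Helpers

variable {G : Type*} [Group G]

private lemma fact_eq' {p m k : ℕ} (hp : p.Prime) (hm : m ≠ 0) (h1 : p ^ k ∣ m)
    (h2 : ¬ p ^ (k + 1) ∣ m) : m.factorization p = k := by
  have a1 : k ≤ m.factorization p := (Nat.Prime.pow_dvd_iff_le_factorization hp hm).mp h1
  have a2 : ¬ (k + 1 ≤ m.factorization p) := fun h =>
    h2 ((Nat.Prime.pow_dvd_iff_le_factorization hp hm).mpr h)
  omega

private lemma sylow_coe_card [Finite G] {p : ℕ} [Fact p.Prime] (P : Sylow p G) :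
    Nat.card (P : Subgroup G) = Nat.card P := rfl

private lemma sylow_card_eq [Finite G] {p : ℕ} [Fact p.Prime] (P : Sylow p G)
    (h1 : p ∣ Nat.card G) (h2 : ¬ p ^ 2 ∣ Nat.card G) : Nat.card (P : Subgroup G) = p := by
  rw [sylow_coe_card, Sylow.card_eq_multiplicity,
    fact_eq' (k := 1) Fact.out Nat.card_pos.ne' (by simpa using h1) (by simpa using h2), pow_one]

private lemma normal_of_subsingleton_sylow {p : ℕ} [Fact p.Prime]
    (h : Subsingleton (Sylow p G)) (P : Sylow p G) : (P : Subgroup G).Normal := by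
  rw [← normalizer_eq_top_iff, eq_top_iff']
  intro g
  exact Sylow.smul_eq_iff_mem_normalizer.mp (Subsingleton.elim _ _)

private lemma eq_of_card_five [Finite G] (h25 : ¬ 5 ^ 2 ∣ Nat.card G)
    (hss : Nat.card (Sylow 5 G) = 1) {Q R : Subgroup G} (hQ : Nat.card Q = 5)
    (hR : Nat.card R = 5) : Q = R := by
  haveI : Fact (Nat.Prime 5) := ⟨by norm_num⟩
  have h5 : (5 : ℕ) ∣ Nat.card G := hQ ▸ Q.card_subgroup_dvd_card
  have hsub : Subsingleton (Sylow 5 G) := (Nat.card_eq_one_iff_unique.mp hss).1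
  obtain ⟨SQ, hSQ⟩ := (IsPGroup.of_card (n := 1) (by simpa using hQ)).exists_le_sylow
  obtain ⟨SR, hSR⟩ := (IsPGroup.of_card (n := 1) (by simpa using hR)).exists_le_sylow
  have c1 : Q = SQ := Subgroup.eq_of_le_of_card_ge hSQ (by rw [sylow_card_eq SQ h5 h25, hQ])
  have c2 : R = SR := Subgroup.eq_of_le_of_card_ge hSR (by rw [sylow_card_eq SR h5 h25, hR])
  rw [c1, c2, Subsingleton.elim SQ SR]

end Helpers
section Helpers2
variable {G : Type*} [Group G]

private lemma conj_smul_eq_of_normal {Q : Subgroup G} (hQ : Q.Normal) (g : G) :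
    Q.map (MulAut.conj g).toMonoidHom = Q := by
  ext x
  constructor
  · rintro ⟨y, hy, rfl⟩
    simpa using hQ.conj_mem y hy g
  · intro hx
    refine ⟨g⁻¹ * x * g, by simpa using hQ.conj_mem x hx g⁻¹, ?_⟩
    simp [MulAut.conj_apply, mul_assoc]

private lemma sylow5_unique_of_normal [Finite G] (h25 : ¬ 5 ^ 2 ∣ Nat.card G) {Q : Subgroup G}
    (hQ : Nat.card Q = 5) (hQn : Q.Normal) : Nat.card (Sylow 5 G) = 1 := by
  haveI : Fact (Nat.Prime 5) := ⟨by norm_num⟩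
  have h5 : (5 : ℕ) ∣ Nat.card G := hQ ▸ Q.card_subgroup_dvd_card
  obtain ⟨S, hS⟩ := (IsPGroup.of_card (n := 1) (by simpa using hQ)).exists_le_sylow
  have hQS : Q = ↑S := Subgroup.eq_of_le_of_card_ge hS (by rw [sylow_card_eq S h5 h25, hQ])
  have hall : ∀ R : Sylow 5 G, R = S := by
    intro R
    obtain ⟨g, hg⟩ := MulAction.exists_smul_eq G S R
    apply Sylow.ext
    have hconj : ((g • S : Sylow 5 G) : Subgroup G) = ↑S := by
      rw [Sylow.coe_subgroup_smul, ← hQS]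
      show Q.map (MulAut.conj g).toMonoidHom = Q
      exact conj_smul_eq_of_normal hQn g
    rw [← hg]
    exact hconj
  exact Nat.card_eq_one_iff_unique.mpr ⟨⟨fun a b => (hall a).trans (hall b).symm⟩, ⟨S⟩⟩

private lemma exists_normal_five [Finite G] {N : Subgroup G} (hN : N.Normal)
    (h5 : 5 ∣ Nat.card N) (h25 : ¬ 5 ^ 2 ∣ Nat.card N) (hss : Nat.card (Sylow 5 N) = 1) :
    ∃ Q : Subgroup G, Nat.card Q = 5 ∧ Q.Normal := by
  haveI : Fact (Nat.Prime 5) := ⟨by norm_num⟩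
  obtain ⟨P⟩ : Nonempty (Sylow 5 N) := Sylow.nonempty
  have hPcard : Nat.card ((P : Subgroup ↥N) : Subgroup ↥N) = 5 := sylow_card_eq P h5 h25
  set Q := (P : Subgroup ↥N).map N.subtype with hQdef
  have hQN : Q ≤ N := map_subtype_le _
  have hQcard : Nat.card Q = 5 := by
    rw [← hPcard]
    exact (Nat.card_congr
      ((P : Subgroup ↥N).equivMapOfInjective N.subtype N.subtype_injective).toEquiv).symm
  refine ⟨Q, hQcard, ⟨fun q hq g => ?_⟩⟩
  set Qg := Q.map (MulAut.conj g).toMonoidHom with hQgdef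
  have hQgN : Qg ≤ N := by
    rintro _ ⟨y, hy, rfl⟩
    simpa using hN.conj_mem y (hQN hy) g
  have hQgcard : Nat.card Qg = 5 := by
    rw [← hQcard]
    exact (Nat.card_congr (Q.equivMapOfInjective _ (MulAut.conj g).injective).toEquiv).symm
  have e1 : Nat.card (Q.subgroupOf N) = 5 := by
    rw [← hQcard]; exact Nat.card_congr (subgroupOfEquivOfLe hQN).toEquiv
  have e2 : Nat.card (Qg.subgroupOf N) = 5 := by
    rw [← hQgcard]; exact Nat.card_congr (subgroupOfEquivOfLe hQgN).toEquiv
  have heq : Qg.subgroupOf N = Q.subgroupOf N := eq_of_card_five h25 hss e2 e1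
  have hQQg : Qg = Q := by
    have h1 := congrArg (fun (X : Subgroup ↥N) => X.map N.subtype) heq
    simpa [subgroupOf_map_subtype, inf_of_le_left hQgN, inf_of_le_left hQN] using h1
  rw [← hQQg]
  exact ⟨q, hq, by simp [MulAut.conj_apply]⟩

end Helpers2
section Helpers3
variable {G : Type*} [Group G]

private lemma dvd_twelve_mod_five {n : ℕ} (h1 : n ∣ 12) (h2 : n % 5 = 1) : n = 1 ∨ n = 6 := by
  have h3 : n ≤ 12 := Nat.le_of_dvd (by norm_num) h1
  interval_cases n <;> revert h2 <;> revert h1 <;> decide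

private lemma sylow_five_count [Finite G] {k : ℕ} (hcard : Nat.card G = 5 * k) (hk : k ∣ 12) :
    Nat.card (Sylow 5 G) = 1 ∨ (Nat.card (Sylow 5 G) = 6 ∧ 6 ∣ k) := by
  haveI : Fact (Nat.Prime 5) := ⟨by norm_num⟩
  have h25 : ¬ 5 ^ 2 ∣ Nat.card G := by
    rw [hcard]
    rintro ⟨c, hc⟩
    have h5k : (5 : ℕ) ∣ k := ⟨c, by omega⟩
    have : (5 : ℕ) ∣ 12 := h5k.trans hk
    norm_num at this
  have h5 : (5 : ℕ) ∣ Nat.card G := ⟨k, hcard⟩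
  obtain ⟨P⟩ : Nonempty (Sylow 5 G) := Sylow.nonempty
  have hPc : Nat.card (P : Subgroup G) = 5 := sylow_card_eq P h5 h25
  have hPi : (P : Subgroup G).index = k := by
    have h := (P : Subgroup G).card_mul_index
    rw [hPc, hcard] at h
    omega
  have hdvd : Nat.card (Sylow 5 G) ∣ 12 := (Sylow.card_dvd_index P).trans (hPi ▸ hk)
  have hmod : Nat.card (Sylow 5 G) % 5 = 1 := by
    have h := card_sylow_modEq_one 5 G
    unfold Nat.ModEq at h
    omega
  rcases dvd_twelve_mod_five hdvd hmod with h | h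
  · exact Or.inl h
  · refine Or.inr ⟨h, ?_⟩
    have h' := Sylow.card_dvd_index P
    rw [hPi, h] at h'
    exact h'

private lemma disjoint_of_prime_card [Finite G] {p : ℕ} (hp : p.Prime) {P Q : Subgroup G}
    (hP : Nat.card P = p) (hQ : Nat.card Q = p) (hne : P ≠ Q) : P ⊓ Q = ⊥ := by
  by_contra h
  obtain ⟨x, hx, hx1⟩ := (P ⊓ Q).bot_or_exists_ne_one.resolve_left h
  obtain ⟨hxP', hxQ'⟩ := Subgroup.mem_inf.mp hx
  have hxP : Subgroup.zpowers x ≤ P := Subgroup.zpowers_le.mpr hxP'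
  have hxQ : Subgroup.zpowers x ≤ Q := Subgroup.zpowers_le.mpr hxQ'
  have hord : orderOf x ∣ p := by
    have := Subgroup.card_dvd_of_le hxP
    rwa [Nat.card_zpowers, hP] at this
  have hordp : orderOf x = p :=
    (hp.eq_one_or_self_of_dvd _ hord).resolve_left (by simpa [orderOf_eq_one_iff] using hx1)
  have e1 : Subgroup.zpowers x = P :=
    Subgroup.eq_of_le_of_card_ge hxP (by rw [Nat.card_zpowers, hordp, hP])
  have e2 : Subgroup.zpowers x = Q :=
    Subgroup.eq_of_le_of_card_ge hxQ (by rw [Nat.card_zpowers, hordp, hQ])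
  exact hne (e1.symm.trans e2)

private lemma order_dvd_of_mem {c : ℕ} {P : Subgroup G} [Finite G] (hc : Nat.card P = c)
    {x : G} (hx : x ∈ P) : orderOf x ∣ c := by
  have h := orderOf_dvd_natCard (⟨x, hx⟩ : P)
  rwa [Subgroup.orderOf_mk, hc] at h

private lemma sylow_counting [Finite G] {p q cp cq : ℕ} [Fact p.Prime] [Fact q.Prime]
    (hcop : Nat.Coprime cp cq)
    (hcp : ∀ P : Sylow p G, Nat.card (P : Subgroup G) = cp)
    (hcq : ∀ P : Sylow q G, Nat.card (P : Subgroup G) = cq)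
    (hdp : ∀ P Q : Sylow p G, P ≠ Q → (P : Subgroup G) ⊓ (Q : Subgroup G) = ⊥)
    (hdq : ∀ P Q : Sylow q G, P ≠ Q → (P : Subgroup G) ⊓ (Q : Subgroup G) = ⊥) :
    Nat.card (Sylow p G) * (cp - 1) + Nat.card (Sylow q G) * (cq - 1) + 1 ≤ Nat.card G := by
  classical
  letI := Fintype.ofFinite G
  letI := Fintype.ofFinite (Sylow p G)
  letI := Fintype.ofFinite (Sylow q G)
  have key : ∀ (P : Sylow p G) (Q : Sylow q G) (x : G),
      x ∈ (P : Subgroup G) → x ∈ (Q : Subgroup G) → x = 1 := by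
    intro P Q x h1 h2
    have d1 := order_dvd_of_mem (hcp P) h1
    have d2 := order_dvd_of_mem (hcq Q) h2
    have hg : Nat.gcd cp cq = 1 := hcop
    have hdx : orderOf x ∣ 1 := hg ▸ Nat.dvd_gcd d1 d2
    rwa [Nat.dvd_one, orderOf_eq_one_iff] at hdx
  let f : ((Σ P : Sylow p G, {x : G // x ∈ (P : Subgroup G) ∧ x ≠ 1}) ⊕
      (Σ P : Sylow q G, {x : G // x ∈ (P : Subgroup G) ∧ x ≠ 1})) ⊕ Unit → G :=
    Sum.elim (Sum.elim (fun s => s.2.1) (fun s => s.2.1)) (fun _ => 1)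
  have hinj : Function.Injective f := by
    rintro ((⟨P, x, hx1, hx2⟩ | ⟨P, x, hx1, hx2⟩) | _)
      ((⟨P', x', hx1', hx2'⟩ | ⟨P', x', hx1', hx2'⟩) | _) h <;>
      simp only [f, Sum.elim_inl, Sum.elim_inr] at h
    · obtain rfl : P = P' := by
        by_contra hne
        refine hx2 ?_
        have hmem : x ∈ (P : Subgroup G) ⊓ (P' : Subgroup G) :=
          Subgroup.mem_inf.mpr ⟨hx1, h ▸ hx1'⟩
        rwa [hdp P P' hne, Subgroup.mem_bot] at hmem
      subst h
      rfl
    · exact absurd (key P P' x hx1 (h ▸ hx1')) hx2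
    · exact absurd h hx2
    · exact absurd (key P' P x (h ▸ hx1') hx1) hx2
    · obtain rfl : P = P' := by
        by_contra hne
        refine hx2 ?_
        have hmem : x ∈ (P : Subgroup G) ⊓ (P' : Subgroup G) :=
          Subgroup.mem_inf.mpr ⟨hx1, h ▸ hx1'⟩
        rwa [hdq P P' hne, Subgroup.mem_bot] at hmem
      subst h
      rfl
    · exact absurd h hx2
    · exact absurd h.symm hx2'
    · exact absurd h.symm hx2'
    · rfl
  have hcard := Fintype.card_le_of_injective f hinj
  have cardsub : ∀ {r : ℕ} (R : Subgroup G), Nat.card R = r →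
      Fintype.card {x : G // x ∈ R ∧ x ≠ 1} = r - 1 := by
    intro r R hR
    have e : {x : G // x ∈ R ∧ x ≠ 1} ≃ {y : R // ¬ (y = 1)} :=
      { toFun := fun x => ⟨⟨x.1, x.2.1⟩, fun hh => x.2.2 (congrArg Subtype.val hh)⟩
        invFun := fun y => ⟨y.1.1, y.1.2, fun hh => y.2 (Subtype.ext hh)⟩
        left_inv := fun x => rfl
        right_inv := fun y => rfl }
    rw [Fintype.card_congr e, Fintype.card_subtype_compl, Fintype.card_subtype_eq,
      ← Nat.card_eq_fintype_card, hR]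
  have cTp : Fintype.card (Σ P : Sylow p G, {x : G // x ∈ (P : Subgroup G) ∧ x ≠ 1}) =
      Fintype.card (Sylow p G) * (cp - 1) := by
    rw [Fintype.card_sigma]
    have hs : ∀ P : Sylow p G, Fintype.card {x : G // x ∈ (P : Subgroup G) ∧ x ≠ 1} = cp - 1 :=
      fun P => cardsub _ (hcp P)
    simp only [hs]
    rw [Finset.sum_const, Finset.card_univ, smul_eq_mul]
  have cTq : Fintype.card (Σ P : Sylow q G, {x : G // x ∈ (P : Subgroup G) ∧ x ≠ 1}) =
      Fintype.card (Sylow q G) * (cq - 1) := by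
    rw [Fintype.card_sigma]
    have hs : ∀ P : Sylow q G, Fintype.card {x : G // x ∈ (P : Subgroup G) ∧ x ≠ 1} = cq - 1 :=
      fun P => cardsub _ (hcq P)
    simp only [hs]
    rw [Finset.sum_const, Finset.card_univ, smul_eq_mul]
  rw [Fintype.card_sum, Fintype.card_sum, cTp, cTq, Fintype.card_unit] at hcard
  simpa [Nat.card_eq_fintype_card] using hcard

end Helpers3
section Helpers4
variable {G : Type*} [Group G]

private lemma sylow_five_card_thirty [Finite G] (h : Nat.card G = 30) :
    Nat.card (Sylow 5 G) = 1 := by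
  haveI f5 : Fact (Nat.Prime 5) := ⟨by norm_num⟩
  haveI f3 : Fact (Nat.Prime 3) := ⟨by norm_num⟩
  rcases sylow_five_count (G := G) (k := 6) (by omega) (by norm_num) with h1 | ⟨h6, -⟩
  · exact h1
  exfalso
  have h3 : (3 : ℕ) ∣ Nat.card G := by rw [h]; norm_num
  have h9 : ¬ (3 : ℕ) ^ 2 ∣ Nat.card G := by rw [h]; norm_num
  have h5 : (5 : ℕ) ∣ Nat.card G := by rw [h]; norm_num
  have h25 : ¬ (5 : ℕ) ^ 2 ∣ Nat.card G := by rw [h]; norm_num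
  have hc3 : ∀ P : Sylow 3 G, Nat.card (P : Subgroup G) = 3 := fun P => sylow_card_eq P h3 h9
  have hc5 : ∀ P : Sylow 5 G, Nat.card (P : Subgroup G) = 5 := fun P => sylow_card_eq P h5 h25
  obtain ⟨P3⟩ : Nonempty (Sylow 3 G) := Sylow.nonempty
  have hi3 : (P3 : Subgroup G).index = 10 := by
    have hh := (P3 : Subgroup G).card_mul_index
    rw [hc3 P3, h] at hh
    omega
  have hd3 : Nat.card (Sylow 3 G) ∣ 10 := hi3 ▸ Sylow.card_dvd_index P3
  have hm3 : Nat.card (Sylow 3 G) % 3 = 1 := by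
    have hh := card_sylow_modEq_one 3 G
    unfold Nat.ModEq at hh
    omega
  have h3cases : Nat.card (Sylow 3 G) = 1 ∨ Nat.card (Sylow 3 G) = 10 := by
    have hle := Nat.le_of_dvd (by norm_num) hd3
    set n := Nat.card (Sylow 3 G) with hn
    clear_value n
    interval_cases n <;> revert hm3 <;> revert hd3 <;> decide
  rcases h3cases with h31 | h310
  · -- normal Sylow 3, build normal subgroup of order 15, then unique Sylow 5
    have hsub3 : Subsingleton (Sylow 3 G) := (Nat.card_eq_one_iff_unique.mp h31).1
    have hTn : ((P3 : Subgroup G)).Normal := normal_of_subsingleton_sylow hsub3 P3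
    have hq : Nat.card (G ⧸ (P3 : Subgroup G)) = 10 := by
      rw [← Subgroup.index_eq_card]
      exact hi3
    have hq5 : Nat.card (Sylow 5 (G ⧸ (P3 : Subgroup G))) = 1 := by
      rcases sylow_five_count (G := G ⧸ (P3 : Subgroup G)) (k := 2) (by rw [hq]) (by norm_num) with h1 | ⟨-, h6'⟩
      · exact h1
      · norm_num at h6'
    obtain ⟨Q5⟩ : Nonempty (Sylow 5 (G ⧸ (P3 : Subgroup G))) := Sylow.nonempty
    have hQ5n : ((Q5 : Subgroup (G ⧸ (P3 : Subgroup G)))).Normal :=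
      normal_of_subsingleton_sylow (Nat.card_eq_one_iff_unique.mp hq5).1 Q5
    set M := (Q5 : Subgroup (G ⧸ (P3 : Subgroup G))).comap
      (QuotientGroup.mk' (P3 : Subgroup G)) with hMdef
    have hMn : M.Normal := hQ5n.comap _
    have hQ5card : Nat.card (Q5 : Subgroup (G ⧸ (P3 : Subgroup G))) = 5 :=
      sylow_card_eq Q5 (by rw [hq]; norm_num) (by rw [hq]; norm_num)
    have hQ5i : (Q5 : Subgroup (G ⧸ (P3 : Subgroup G))).index = 2 := by
      have hh := (Q5 : Subgroup (G ⧸ (P3 : Subgroup G))).card_mul_index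
      rw [hQ5card, hq] at hh
      omega
    have hMi : M.index = 2 := by
      rw [hMdef, Subgroup.index_comap_of_surjective _ (QuotientGroup.mk'_surjective _)]
      exact hQ5i
    have hMcard : Nat.card M = 15 := by
      have hh := M.card_mul_index
      rw [hMi, h] at hh
      omega
    have hssM : Nat.card (Sylow 5 ↥M) = 1 := by
      rcases sylow_five_count (G := ↥M) (k := 3) (by rw [hMcard]) (by norm_num) with h1 | ⟨-, h6'⟩
      · exact h1
      · norm_num at h6'
    obtain ⟨Q, hQc, hQn⟩ := exists_normal_five hMn (by rw [hMcard]; norm_num) (by rw [hMcard]; norm_num) hssM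
    have := sylow5_unique_of_normal h25 hQc hQn
    omega
  · -- counting contradiction
    have hle := sylow_counting (p := 5) (q := 3) (cp := 5) (cq := 3) (by norm_num) hc5 hc3
      (fun P Q hne => disjoint_of_prime_card (by norm_num) (hc5 P) (hc5 Q)
        (fun hh => hne (Sylow.ext hh)))
      (fun P Q hne => disjoint_of_prime_card (by norm_num) (hc3 P) (hc3 Q)
        (fun hh => hne (Sylow.ext hh)))
    rw [h, h6, h310] at hle
    norm_num at hle

end Helpers4
section Helpers5
variable {H : Type*} [Group H]

private lemma contra_five [Finite H] (hcard : Nat.card H = 60)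
    (P : Sylow 5 H) (hPn : ¬ (P : Subgroup H).Normal)
    (M : Subgroup H) (hMn : M.Normal)
    (hd : Nat.card M = 5 ∨ Nat.card M = 10 ∨ Nat.card M = 15 ∨ Nat.card M = 20 ∨
      Nat.card M = 30) : False := by
  haveI : Fact (Nat.Prime 5) := ⟨by norm_num⟩
  have hss : Nat.card (Sylow 5 ↥M) = 1 := by
    rcases hd with h | h | h | h | h
    · rcases sylow_five_count (G := ↥M) (k := 1) (by rw [h]) (by norm_num) with h1 | ⟨-, h6⟩
      · exact h1
      · norm_num at h6
    · rcases sylow_five_count (G := ↥M) (k := 2) (by rw [h]) (by norm_num) with h1 | ⟨-, h6⟩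
      · exact h1
      · norm_num at h6
    · rcases sylow_five_count (G := ↥M) (k := 3) (by rw [h]) (by norm_num) with h1 | ⟨-, h6⟩
      · exact h1
      · norm_num at h6
    · rcases sylow_five_count (G := ↥M) (k := 4) (by rw [h]) (by norm_num) with h1 | ⟨-, h6⟩
      · exact h1
      · norm_num at h6
    · exact sylow_five_card_thirty h
  have h5M : 5 ∣ Nat.card M := by rcases hd with h | h | h | h | h <;> rw [h] <;> norm_num
  have h25M : ¬ 5 ^ 2 ∣ Nat.card M := by
    rcases hd with h | h | h | h | h <;> rw [h] <;> norm_num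
  obtain ⟨Q, hQc, hQn⟩ := exists_normal_five hMn h5M h25M hss
  have h1 := sylow5_unique_of_normal (by rw [hcard]; norm_num) hQc hQn
  have hsub : Subsingleton (Sylow 5 H) := (Nat.card_eq_one_iff_unique.mp h1).1
  exact hPn (normal_of_subsingleton_sylow hsub P)

private lemma simple_sixty [Finite H] (hcard : Nat.card H = 60)
    (hgen : Subgroup.closure {g : H | orderOf g = 2} = ⊤)
    (P : Sylow 5 H) (hPn : ¬ (P : Subgroup H).Normal) :
    ∀ N : Subgroup H, N.Normal → N = ⊥ ∨ N = ⊤ := by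
  haveI : Fact (Nat.Prime 5) := ⟨by norm_num⟩
  intro N hN
  by_contra hcon
  push_neg at hcon
  obtain ⟨hb, ht⟩ := hcon
  obtain ⟨d, hd⟩ : ∃ d, Nat.card N = d := ⟨_, rfl⟩
  have hdvd : d ∣ 60 := hd ▸ hcard ▸ N.card_subgroup_dvd_card
  have hpos : 1 ≤ d := hd ▸ Nat.card_pos
  have hle : d ≤ 60 := Nat.le_of_dvd (by norm_num) hdvd
  have hne1 : d ≠ 1 := fun h => hb (Subgroup.card_eq_one.mp (hd.trans h))
  have hne60 : d ≠ 60 := fun h => ht (Subgroup.eq_top_of_card_eq _ ((hd.trans h).trans hcard.symm))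
  -- odd index cases (4 and 12): all involutions lie in N
  have hodd : ∀ e : ℕ, N.index = e → (e = 15 ∨ e = 5) → False := by
    intro e hie he
    have hsub : {g : H | orderOf g = 2} ⊆ ↑N := by
      intro t ht2
      have o1 : orderOf ((QuotientGroup.mk' N) t) ∣ 2 := by
        have := orderOf_map_dvd (QuotientGroup.mk' N) t
        rwa [Set.mem_setOf_eq.mp ht2] at this
      have o2 : orderOf ((QuotientGroup.mk' N) t) ∣ e := by
        have := orderOf_dvd_natCard ((QuotientGroup.mk' N) t)
        rwa [← Subgroup.index_eq_card, hie] at this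
      have oe : orderOf ((QuotientGroup.mk' N) t) = 1 := by
        rcases (Nat.dvd_prime Nat.prime_two).mp o1 with h' | h'
        · exact h'
        · exfalso
          rw [h'] at o2
          rcases he with rfl | rfl <;> exact absurd o2 (by decide)
      exact (QuotientGroup.eq_one_iff t).mp (orderOf_eq_one_iff.mp oe)
    have htop : (⊤ : Subgroup H) ≤ N := hgen ▸ (Subgroup.closure_le N).mpr hsub
    exact ht (le_antisymm le_top htop)
  -- quotient cases (2, 3, 6)
  have hquot : (d = 2 ∨ d = 3 ∨ d = 6) → False := by
    intro hcases
    have hidx : N.index = 60 / d := by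
      have hh := N.card_mul_index
      rw [hd, hcard] at hh
      rcases hcases with rfl | rfl | rfl <;> omega
    have hqcard : Nat.card (H ⧸ N) = 60 / d := by rw [← Subgroup.index_eq_card, hidx]
    have hq5 : Nat.card (Sylow 5 (H ⧸ N)) = 1 := by
      rcases hcases with rfl | rfl | rfl
      · exact sylow_five_card_thirty (by rw [hqcard])
      · rcases sylow_five_count (G := H ⧸ N) (k := 4) (by rw [hqcard]) (by norm_num) with
          h1 | ⟨-, h6⟩
        · exact h1
        · norm_num at h6
      · rcases sylow_five_count (G := H ⧸ N) (k := 2) (by rw [hqcard]) (by norm_num) with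
          h1 | ⟨-, h6⟩
        · exact h1
        · norm_num at h6
    obtain ⟨Q5⟩ : Nonempty (Sylow 5 (H ⧸ N)) := Sylow.nonempty
    have hQ5n : ((Q5 : Subgroup (H ⧸ N))).Normal :=
      normal_of_subsingleton_sylow (Nat.card_eq_one_iff_unique.mp hq5).1 Q5
    set M := (Q5 : Subgroup (H ⧸ N)).comap (QuotientGroup.mk' N) with hMdef
    have hMn : M.Normal := hQ5n.comap _
    have hQ5card : Nat.card (Q5 : Subgroup (H ⧸ N)) = 5 :=
      sylow_card_eq Q5 (by rw [hqcard]; rcases hcases with rfl | rfl | rfl <;> norm_num)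
        (by rw [hqcard]; rcases hcases with rfl | rfl | rfl <;> norm_num)
    have hQ5i : (Q5 : Subgroup (H ⧸ N)).index = 12 / d := by
      have hh := (Q5 : Subgroup (H ⧸ N)).card_mul_index
      rw [hQ5card, hqcard] at hh
      rcases hcases with rfl | rfl | rfl <;> omega
    have hMi : M.index = 12 / d := by
      rw [hMdef, Subgroup.index_comap_of_surjective _ (QuotientGroup.mk'_surjective _)]
      exact hQ5i
    have hMcard : Nat.card M = 5 * d := by
      have hh := M.card_mul_index
      rw [hMi, hcard] at hh
      rcases hcases with rfl | rfl | rfl <;> omega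
    refine contra_five hcard P hPn M hMn ?_
    rcases hcases with rfl | rfl | rfl <;> simp [hMcard]
  -- enumerate
  have hdlist : d = 2 ∨ d = 3 ∨ d = 4 ∨ d = 5 ∨ d = 6 ∨ d = 10 ∨ d = 12 ∨ d = 15 ∨
      d = 20 ∨ d = 30 := by
    interval_cases d <;> revert hne60 <;> revert hne1 <;> revert hdvd <;> decide
  rcases hdlist with rfl | rfl | rfl | rfl | rfl | rfl | rfl | rfl | rfl | rfl
  · exact hquot (by norm_num)
  · exact hquot (by norm_num)
  · refine hodd 15 ?_ (by norm_num)
    have hh := N.card_mul_index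
    rw [hd, hcard] at hh
    omega
  · exact contra_five hcard P hPn N hN (by omega)
  · exact hquot (by norm_num)
  · exact contra_five hcard P hPn N hN (by omega)
  · refine hodd 5 ?_ (by norm_num)
    have hh := N.card_mul_index
    rw [hd, hcard] at hh
    omega
  · exact contra_five hcard P hPn N hN (by omega)
  · exact contra_five hcard P hPn N hN (by omega)
  · exact contra_five hcard P hPn N hN (by omega)

end Helpers5
section Helpers6
variable {H : Type*} [Group H]

private lemma ker_le_of_index {M : Subgroup H} :
    (MulAction.toPermHom H (H ⧸ M)).ker ≤ M := by
  intro g hg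
  have h1 : (MulAction.toPermHom H (H ⧸ M)) g = 1 := hg
  have h2 : g • ((1 : H) : H ⧸ M) = ((1 : H) : H ⧸ M) := by
    have := congrArg (fun π => π ((1 : H) : H ⧸ M)) h1
    simpa using this
  exact (MulAction.stabilizer_quotient M) ▸ (MulAction.mem_stabilizer_iff.mpr h2)

private lemma no_small_index [Finite H]
    (hsim : ∀ N : Subgroup H, N.Normal → N = ⊥ ∨ N = ⊤)
    (M : Subgroup H) (hM1 : M.index ≠ 1) (hMlt : Nat.factorial M.index < Nat.card H) : False := by
  classical
  set φ := MulAction.toPermHom H (H ⧸ M) with hφ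
  have hker : φ.ker = ⊥ := by
    rcases hsim φ.ker inferInstance with h | h
    · exact h
    · exfalso
      have : M = ⊤ := by
        rw [eq_top_iff]
        intro x _
        exact ker_le_of_index (h ▸ Subgroup.mem_top x)
      exact hM1 (this ▸ Subgroup.index_top)
  have hinj : Function.Injective φ := (MonoidHom.ker_eq_bot_iff φ).mp hker
  have hle := Nat.card_le_card_of_injective φ hinj
  letI : Fintype (H ⧸ M) := Fintype.ofFinite _
  have hperm : Nat.card (Equiv.Perm (H ⧸ M)) = Nat.factorial M.index := by
    rw [Nat.card_eq_fintype_card, Fintype.card_perm, ← Nat.card_eq_fintype_card,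
      ← Subgroup.index_eq_card]
  omega

private lemma eq_alternating_of_index_two {α : Type*} [Fintype α] [DecidableEq α] [Nontrivial α]
    {K : Subgroup (Equiv.Perm α)} (hK : K.index = 2) : K = alternatingGroup α := by
  have hle : alternatingGroup α ≤ K := by
    rw [← Equiv.Perm.closure_three_cycles_eq_alternating]
    refine (Subgroup.closure_le K).mpr ?_
    intro g hg
    have h3 : g ^ 3 = 1 := by
      rw [← Equiv.Perm.IsThreeCycle.orderOf hg]
      exact pow_orderOf_eq_one g
    have h4 : (g ^ 2) ^ 2 = g := by
      rw [← pow_mul]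
      have : g ^ 4 = g ^ 3 * g := by rw [pow_succ]
      rw [show 2 * 2 = 4 from rfl, this, h3, one_mul]
    exact h4 ▸ Subgroup.sq_mem_of_index_two hK (g ^ 2)
  have h2 : 2 * Fintype.card (alternatingGroup α) = Fintype.card (Equiv.Perm α) :=
    two_mul_card_alternatingGroup
  have h3 := K.card_mul_index
  rw [hK] at h3
  have h2' : 2 * Nat.card (alternatingGroup α) = Nat.card (Equiv.Perm α) := by
    rw [Nat.card_eq_fintype_card, Nat.card_eq_fintype_card]
    exact h2
  have h4 : Nat.card K ≤ Nat.card (alternatingGroup α) := by omega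
  exact (Subgroup.eq_of_le_of_card_ge hle h4).symm

private def permMulEquiv {α β : Type*} (e : α ≃ β) : Equiv.Perm α ≃* Equiv.Perm β where
  toFun := fun f => e.permCongr f
  invFun := fun g => e.symm.permCongr g
  left_inv := fun f => by ext x; simp
  right_inv := fun g => by ext x; simp
  map_mul' := fun f g => by ext x; simp

end Helpers6
/-- A group of order `60` generated by involutions, containing a subgroup isomorphic to
the dihedral group of order `6`, whose Sylow `5`-subgroup is not normal, is `A₅`. -/
theorem stmt_7 (H : Type*) [Group H] (hcard : Nat.card H = 60)
    (hgen : Subgroup.closure {g : H | orderOf g = 2} = ⊤)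
    (hD6 : ∃ D : Subgroup H, Nonempty (D ≃* DihedralGroup 3))
    (hsyl : ∃ P : Sylow 5 H, ¬ (P : Subgroup H).Normal) :
    Nonempty (H ≃* alternatingGroup (Fin 5)) := by
  classical
  haveI : Finite H := Nat.finite_of_card_ne_zero (by rw [hcard]; norm_num)
  haveI f2 : Fact (Nat.Prime 2) := ⟨Nat.prime_two⟩
  haveI f5 : Fact (Nat.Prime 5) := ⟨by norm_num⟩
  obtain ⟨P, hPn⟩ := hsyl
  have hsim := simple_sixty hcard hgen P hPn
  have h25 : ¬ (5 : ℕ) ^ 2 ∣ Nat.card H := by rw [hcard]; norm_num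
  have hc5 : ∀ P' : Sylow 5 H, Nat.card (P' : Subgroup H) = 5 :=
    fun P' => sylow_card_eq P' (by rw [hcard]; norm_num) h25
  have hn5 : Nat.card (Sylow 5 H) = 6 := by
    rcases sylow_five_count (G := H) (k := 12) (by rw [hcard]) (by norm_num) with h1 | ⟨h6, -⟩
    · exact absurd (normal_of_subsingleton_sylow (Nat.card_eq_one_iff_unique.mp h1).1 P) hPn
    · exact h6
  have hc2 : ∀ P' : Sylow 2 H, Nat.card (P' : Subgroup H) = 4 := by
    intro P'
    rw [sylow_coe_card, Sylow.card_eq_multiplicity, hcard,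
      fact_eq' (k := 2) Nat.prime_two (by norm_num) (by norm_num) (by norm_num)]
    norm_num
  obtain ⟨P2⟩ : Nonempty (Sylow 2 H) := Sylow.nonempty
  have hi2 : (P2 : Subgroup H).index = 15 := by
    have hh := (P2 : Subgroup H).card_mul_index
    rw [hc2 P2, hcard] at hh
    omega
  have hd2 : Nat.card (Sylow 2 H) ∣ 15 := hi2 ▸ Sylow.card_dvd_index P2
  have hm2 : Nat.card (Sylow 2 H) % 2 = 1 := by
    have hh := card_sylow_modEq_one 2 H
    unfold Nat.ModEq at hh
    omega
  have h2cases : Nat.card (Sylow 2 H) = 1 ∨ Nat.card (Sylow 2 H) = 3 ∨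
      Nat.card (Sylow 2 H) = 5 ∨ Nat.card (Sylow 2 H) = 15 := by
    have hle := Nat.le_of_dvd (by norm_num) hd2
    set n := Nat.card (Sylow 2 H) with hn
    clear_value n
    interval_cases n <;> revert hm2 <;> revert hd2 <;> decide
  obtain ⟨M, hM⟩ : ∃ M : Subgroup H, M.index = 5 := by
    rcases h2cases with h | h | h | h
    · exfalso
      have hnor : ((P2 : Subgroup H)).Normal :=
        normal_of_subsingleton_sylow (Nat.card_eq_one_iff_unique.mp h).1 P2
      rcases hsim _ hnor with h' | h'
      · have hcc := hc2 P2; rw [h', Subgroup.card_bot] at hcc; norm_num at hcc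
      · have hcc := hc2 P2; rw [h', Subgroup.card_top, hcard] at hcc; norm_num at hcc
    · exfalso
      have h3 : (Subgroup.normalizer ((P2 : Subgroup H) : Set H)).index = 3 :=
        h ▸ (Sylow.card_eq_index_normalizer P2).symm
      exact no_small_index hsim _ (by rw [h3]; norm_num)
        (by rw [h3, hcard]; norm_num [Nat.factorial])
    · exact ⟨Subgroup.normalizer ((P2 : Subgroup H) : Set H), h ▸ (Sylow.card_eq_index_normalizer P2).symm⟩
    · by_cases hpt : ∀ P' Q' : Sylow 2 H, P' ≠ Q' →
        (P' : Subgroup H) ⊓ (Q' : Subgroup H) = ⊥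
      · exfalso
        have hle := sylow_counting (p := 2) (q := 5) (cp := 4) (cq := 5) (by norm_num)
          hc2 hc5 hpt
          (fun P' Q' hne => disjoint_of_prime_card (by norm_num) (hc5 P') (hc5 Q')
            (fun hh => hne (Sylow.ext hh)))
        rw [hcard, hn5, h] at hle
        norm_num at hle
      · push_neg at hpt
        obtain ⟨Pa, Pb, hne, hnb⟩ := hpt
        obtain ⟨z, hz, hz1⟩ :=
          ((Pa : Subgroup H) ⊓ (Pb : Subgroup H)).bot_or_exists_ne_one.resolve_left hnb
        obtain ⟨hzA, hzB⟩ := Subgroup.mem_inf.mp hz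
        set C := Subgroup.centralizer {z} with hCdef
        have hPaC : (Pa : Subgroup H) ≤ C := by
          intro x hx
          rw [hCdef, Subgroup.mem_centralizer_iff]
          rintro y (rfl : y = z)
          have hcomm := IsPGroup.commutative_of_card_eq_prime_sq (p := 2)
            (G := (Pa : Subgroup H)) (by rw [hc2 Pa]; norm_num)
          exact congrArg Subtype.val (hcomm ⟨y, hzA⟩ ⟨x, hx⟩)
        have hPbC : (Pb : Subgroup H) ≤ C := by
          intro x hx
          rw [hCdef, Subgroup.mem_centralizer_iff]
          rintro y (rfl : y = z)
          have hcomm := IsPGroup.commutative_of_card_eq_prime_sq (p := 2)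
            (G := (Pb : Subgroup H)) (by rw [hc2 Pb]; norm_num)
          exact congrArg Subtype.val (hcomm ⟨y, hzB⟩ ⟨x, hx⟩)
        have h4C : 4 ∣ Nat.card C := (hc2 Pa) ▸ Subgroup.card_dvd_of_le hPaC
        have hCd : Nat.card C ∣ 60 := hcard ▸ C.card_subgroup_dvd_card
        have hC4 : Nat.card C ≠ 4 := by
          intro h4
          apply hne
          apply Sylow.ext
          have e1 : (Pa : Subgroup H) = C :=
            Subgroup.eq_of_le_of_card_ge hPaC (by rw [h4, hc2 Pa])
          have e2 : (Pb : Subgroup H) = C :=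
            Subgroup.eq_of_le_of_card_ge hPbC (by rw [h4, hc2 Pb])
          rw [e1, e2]
        have hCcases : Nat.card C = 12 ∨ Nat.card C = 20 ∨ Nat.card C = 60 := by
          obtain ⟨c, hc⟩ : ∃ c, Nat.card C = c := ⟨_, rfl⟩
          rw [hc] at h4C hCd hC4 ⊢
          have hcle : c ≤ 60 := Nat.le_of_dvd (by norm_num) hCd
          interval_cases c <;> revert hC4 <;> revert h4C <;> revert hCd <;> decide
        rcases hCcases with h' | h' | h'
        · refine ⟨C, ?_⟩
          have hh := C.card_mul_index
          rw [h', hcard] at hh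
          omega
        · exfalso
          have hh := C.card_mul_index
          rw [h', hcard] at hh
          have hi : C.index = 3 := by omega
          exact no_small_index hsim C (by rw [hi]; norm_num)
            (by rw [hi, hcard]; norm_num [Nat.factorial])
        · exfalso
          have hCtop : C = ⊤ := Subgroup.eq_top_of_card_eq _ (h'.trans hcard.symm)
          have hzn : (Subgroup.zpowers z).Normal := by
            constructor
            intro n hn g
            obtain ⟨k, rfl⟩ := Subgroup.mem_zpowers_iff.mp hn
            have hgC : g ∈ C := hCtop ▸ Subgroup.mem_top g
            have hcz : z * g = g * z := by
              rw [hCdef] at hgC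
              exact Subgroup.mem_centralizer_iff.mp hgC z rfl
            have hcz' : Commute g (z ^ k) :=
              (Commute.symm (a := z) (b := g) hcz).zpow_right k
            have : g * z ^ k * g⁻¹ = z ^ k := by
              rw [hcz'.eq, mul_assoc, mul_inv_cancel, mul_one]
            rw [this]
            exact hn
          rcases hsim _ hzn with h'' | h''
          · refine hz1 ?_
            have := Subgroup.mem_zpowers z
            rwa [h'', Subgroup.mem_bot] at this
          · have hoz : orderOf z = 60 := by
              rw [← Nat.card_zpowers, h'', Subgroup.card_top, hcard]
            have hdz : orderOf z ∣ 4 := order_dvd_of_mem (hc2 Pa) hzA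
            have := Nat.le_of_dvd (by norm_num) hdz
            omega
  -- Endgame: coset action on the 5 cosets of M
  have hfq : Nat.card (H ⧸ M) = 5 := by rw [← Subgroup.index_eq_card, hM]
  letI : Fintype (H ⧸ M) := Fintype.ofFinite _
  have hfq' : Fintype.card (H ⧸ M) = 5 := by rw [← Nat.card_eq_fintype_card, hfq]
  haveI : Nontrivial (H ⧸ M) := Fintype.one_lt_card_iff_nontrivial.mp (by rw [hfq']; norm_num)
  set φ := MulAction.toPermHom H (H ⧸ M) with hφdef
  have hker : φ.ker = ⊥ := by
    rcases hsim φ.ker inferInstance with h | h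
    · exact h
    · exfalso
      have hMt : M = ⊤ := by
        rw [eq_top_iff]
        intro x _
        exact ker_le_of_index (h ▸ Subgroup.mem_top x)
      rw [hMt, Subgroup.index_top] at hM
      norm_num at hM
  have hinj : Function.Injective φ := (MonoidHom.ker_eq_bot_iff φ).mp hker
  have hcardPerm : Nat.card (Equiv.Perm (H ⧸ M)) = 120 := by
    rw [Nat.card_eq_fintype_card, Fintype.card_perm, hfq']
    norm_num [Nat.factorial]
  have hrange : Nat.card φ.range = 60 := by
    rw [← hcard]
    exact (Nat.card_congr (MonoidHom.ofInjective hinj).toEquiv).symm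
  have hidx : φ.range.index = 2 := by
    have hh := φ.range.card_mul_index
    rw [hrange, hcardPerm] at hh
    omega
  have hralt : φ.range = alternatingGroup (H ⧸ M) := eq_alternating_of_index_two hidx
  have e : H ⧸ M ≃ Fin 5 := Fintype.equivFinOfCardEq hfq'
  set μ := permMulEquiv e with hμdef
  have hmap : (alternatingGroup (H ⧸ M)).map μ.toMonoidHom = alternatingGroup (Fin 5) := by
    ext g
    simp only [Subgroup.mem_map]
    constructor
    · rintro ⟨f, hf, rfl⟩
      rw [Equiv.Perm.mem_alternatingGroup]
      have hμf : μ.toMonoidHom f = e.permCongr f := rfl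
      rw [hμf, Equiv.Perm.sign_permCongr]
      exact Equiv.Perm.mem_alternatingGroup.mp hf
    · intro hg
      refine ⟨μ.symm g, ?_, μ.apply_symm_apply g⟩
      rw [Equiv.Perm.mem_alternatingGroup]
      have hμg : μ.symm g = e.symm.permCongr g := rfl
      rw [hμg, Equiv.Perm.sign_permCongr]
      exact Equiv.Perm.mem_alternatingGroup.mp hg
  exact ⟨(((MonoidHom.ofInjective hinj).trans (MulEquiv.subgroupCongr hralt)).trans
    (MulEquiv.subgroupMap μ _)).trans (MulEquiv.subgroupCongr hmap)⟩
end

section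
/- Let $H$ be a group of order $24$ that is generated by involutions and has more than one involution, and suppose the Sylow $3$-subgroup of $H$ is not normal. Then $H \cong S_4$. -/
private lemma perm_decide : ∀ a b : Equiv.Perm (Fin 4), Equiv.Perm.sign a = 1 →
    Equiv.Perm.sign b = 1 → a^2 = 1 → a ≠ 1 → b^3 = 1 → b ≠ 1 →
    a*b*a⁻¹ ≠ 1 ∧ a*b*a⁻¹ ≠ b ∧ a*b*a⁻¹ ≠ b^2 := by decide

set_option maxRecDepth 10000 in
private lemma k4_mul : ∀ a b : Equiv.Perm (Fin 4), (a^2 = 1 ∧ Equiv.Perm.sign a = 1) →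
    (b^2 = 1 ∧ Equiv.Perm.sign b = 1) → ((a*b)^2 = 1 ∧ Equiv.Perm.sign (a*b) = 1) := by decide

/-- The Klein four subgroup of `S₄`. -/
private def K4 : Subgroup (Equiv.Perm (Fin 4)) where
  carrier := {σ | σ^2 = 1 ∧ Equiv.Perm.sign σ = 1}
  one_mem' := by constructor <;> simp
  mul_mem' := fun ha hb => k4_mul _ _ ha hb
  inv_mem' := by
    rintro a ⟨h1, h2⟩
    have ha : a⁻¹ = a := by rw [inv_eq_iff_mul_eq_one, ← pow_two]; exact h1
    rw [ha]; exact ⟨h1, h2⟩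

private lemma fact24 : (Nat.factorization 24) 3 = 1 := by
  rw [show (24:ℕ) = 3*8 by norm_num, Nat.factorization_mul (by norm_num) (by norm_num)]
  simp [Nat.Prime.factorization_self (p:=3) (by norm_num),
    Nat.factorization_eq_zero_of_not_dvd (by norm_num : ¬ (3:ℕ) ∣ 8)]

private lemma fact6 : (Nat.factorization 6) 3 = 1 := by
  rw [show (6:ℕ) = 3*2 by norm_num, Nat.factorization_mul (by norm_num) (by norm_num)]
  simp [Nat.Prime.factorization_self (p:=3) (by norm_num),
    Nat.factorization_eq_zero_of_not_dvd (by norm_num : ¬ (3:ℕ) ∣ 2)]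

/-- A Sylow subgroup is normal if it is the unique Sylow subgroup. -/
private lemma sylow_normal_of_card_one {G : Type*} [Group G] {p : ℕ} [Fact p.Prime]
    (P : Sylow p G) (h : Nat.card (Sylow p G) = 1) : (P : Subgroup G).Normal := by
  have hs : Subsingleton (Sylow p G) := (Nat.card_eq_one_iff_unique.mp h).1
  rw [← Subgroup.normalizer_eq_top_iff, Sylow.coe_coe, ← Sylow.stabilizer_eq_normalizer]
  rw [eq_top_iff]
  intro g _
  rw [MulAction.mem_stabilizer_iff]
  exact Subsingleton.elim _ _

/-- No group of order 6 embeds into the alternating group on 4 letters. -/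
private lemma aux6 {M : Type*} [Group M] (hM : Nat.card M = 6) (f : M →* Equiv.Perm (Fin 4))
    (hf : Function.Injective f) (hev : ∀ m, Equiv.Perm.sign (f m) = 1) : False := by
  have : Finite M := Nat.finite_of_card_ne_zero (by omega)
  have fp3 : Fact (Nat.Prime 3) := ⟨by norm_num⟩
  have : Fintype M := Fintype.ofFinite _
  obtain ⟨b, hb⟩ := exists_prime_orderOf_dvd_card (G := M) 3
    (by rw [← Nat.card_eq_fintype_card, hM]; norm_num)
  obtain ⟨a, ha⟩ := exists_prime_orderOf_dvd_card (G := M) 2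
    (by rw [← Nat.card_eq_fintype_card, hM]; norm_num)
  have hcardb : Nat.card (Subgroup.zpowers b) = 3 ^ (Nat.card M).factorization 3 := by
    rw [Nat.card_zpowers, hb, hM, fact6, pow_one]
  set P : Sylow 3 M := Sylow.ofCard (Subgroup.zpowers b) hcardb with hP
  have hPcoe : (P : Subgroup M) = Subgroup.zpowers b := Sylow.coe_ofCard _ _
  have hidx : (P : Subgroup M).index = 2 := by
    have h1 := Subgroup.card_mul_index (P : Subgroup M)
    rw [hPcoe, Nat.card_zpowers, hb, hM] at h1
    rw [hPcoe]; omega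
  have hnum : Nat.card (Sylow 3 M) = 1 := by
    have h1 : Nat.card (Sylow 3 M) ∣ 2 := hidx ▸ Sylow.card_dvd_index P
    have h2 : Nat.card (Sylow 3 M) % 3 = 1 % 3 := card_sylow_modEq_one 3 M
    have h3 := Nat.le_of_dvd (by norm_num) h1
    interval_cases h : (Nat.card (Sylow 3 M)) <;> omega
  have hnormal : (P : Subgroup M).Normal := sylow_normal_of_card_one P hnum
  have hmem : a * b * a⁻¹ ∈ Subgroup.zpowers b := by
    rw [← hPcoe]; exact hnormal.conj_mem b (by rw [hPcoe]; exact Subgroup.mem_zpowers b) a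
  have hfin : IsOfFinOrder b := isOfFinOrder_of_finite b
  classical
  rw [hfin.mem_zpowers_iff_mem_range_orderOf] at hmem
  simp only [Finset.mem_image, Finset.mem_range, hb] at hmem
  obtain ⟨n, hn3, hbn⟩ := hmem
  have ha2 : (f a)^2 = 1 := by rw [← map_pow, ← ha, pow_orderOf_eq_one, map_one]
  have hb3 : (f b)^3 = 1 := by rw [← map_pow, ← hb, pow_orderOf_eq_one, map_one]
  have ha1 : f a ≠ 1 := by
    intro h; rw [← map_one f] at h
    have := hf h; rw [this, orderOf_one] at ha; omega
  have hb1 : f b ≠ 1 := by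
    intro h; rw [← map_one f] at h
    have := hf h; rw [this, orderOf_one] at hb; omega
  obtain ⟨c1, c2, c3⟩ := perm_decide (f a) (f b) (hev a) (hev b) ha2 ha1 hb3 hb1
  have key : f a * f b * (f a)⁻¹ = (f b) ^ n := by
    rw [← map_inv, ← map_mul, ← map_mul, ← hbn, map_pow]
  interval_cases n
  · rw [pow_zero] at key; exact c1 key
  · rw [pow_one] at key; exact c2 key
  · exact c3 key

/-- `permCongr` as a `MulEquiv`. -/
private def permCongrMulEquiv {α β : Type*} (e : α ≃ β) : Equiv.Perm α ≃* Equiv.Perm β :=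
  { Equiv.permCongr e with
    map_mul' := fun p q => by ext x; simp [Equiv.permCongr_def] }

/-- A group of order `24` generated by involutions, with more than one involution and a
non-normal Sylow `3`-subgroup, is isomorphic to `S₄`. -/
theorem stmt_10 (H : Type*) [Group H] (hcard : Nat.card H = 24)
    (hgen : Subgroup.closure {g : H | orderOf g = 2} = ⊤)
    (hinv : ∃ g h : H, orderOf g = 2 ∧ orderOf h = 2 ∧ g ≠ h)
    (hsyl : ∃ P : Sylow 3 H, ¬ (P : Subgroup H).Normal) :
    Nonempty (H ≃* Equiv.Perm (Fin 4)) := by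
  have hfin : Finite H := Nat.finite_of_card_ne_zero (by rw [hcard]; norm_num)
  have fp3 : Fact (Nat.Prime 3) := ⟨by norm_num⟩
  obtain ⟨P, hP⟩ := hsyl
  -- Sylow 3-subgroups have order 3 and there are 4 of them
  have hcardP : Nat.card (P : Subgroup H) = 3 := by
    rw [Sylow.card_eq_multiplicity, hcard, fact24, pow_one]
  have hindP : (P : Subgroup H).index = 8 := by
    have h1 := Subgroup.card_mul_index (P : Subgroup H)
    rw [hcardP, hcard] at h1; omega
  have hn4 : Nat.card (Sylow 3 H) = 4 := by
    have h1 : Nat.card (Sylow 3 H) ∣ 8 := hindP ▸ Sylow.card_dvd_index P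
    have h2 : Nat.card (Sylow 3 H) % 3 = 1 % 3 := card_sylow_modEq_one 3 H
    have h3 := Nat.le_of_dvd (by norm_num) h1
    have h4 : Nat.card (Sylow 3 H) ≠ 1 := fun h => hP (sylow_normal_of_card_one P h)
    interval_cases h : (Nat.card (Sylow 3 H)) <;> omega
  -- the normalizer has order 6
  have hnormcard : Nat.card (Subgroup.normalizer (P : Set H)) = 6 := by
    have h1 : (Subgroup.normalizer (P : Set H)).index = 4 := by
      rw [← Sylow.card_eq_index_normalizer]; exact hn4
    have h2 := Subgroup.card_mul_index (Subgroup.normalizer (P : Set H))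
    rw [h1, hcard] at h2; omega
  -- the conjugation action on Sylow subgroups
  set φ := MulAction.toPermHom H (Sylow 3 H) with hφ
  have hker_le : φ.ker ≤ (Subgroup.normalizer (P : Set H)) := by
    rw [← Sylow.stabilizer_eq_normalizer]
    intro g hg
    rw [MulAction.mem_stabilizer_iff]
    have h1 : φ g = 1 := hg
    have : φ g P = P := by rw [h1]; rfl
    exact this
  have hkdvd : Nat.card φ.ker ∣ 6 := hnormcard ▸ Subgroup.card_dvd_of_le hker_le
  -- the kernel cannot have order divisible by 3
  have hk3 : Nat.card φ.ker ≠ 3 := by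
    intro h
    have hc : Nat.card φ.ker = 3 ^ (Nat.card H).factorization 3 := by
      rw [h, hcard, fact24, pow_one]
    set Q : Sylow 3 H := Sylow.ofCard φ.ker hc with hQ
    have hQn : (Q : Subgroup H).Normal := by
      rw [Sylow.coe_ofCard]; exact MonoidHom.normal_ker φ
    have := Sylow.unique_of_normal Q hQn
    rw [Nat.card_eq_one_iff_unique.mpr ⟨(by infer_instance : Subsingleton (Sylow 3 H)), ⟨Q⟩⟩] at hn4
    omega
  have hk6 : Nat.card φ.ker ≠ 6 := by
    intro h
    have heq : φ.ker = (Subgroup.normalizer (P : Set H)) := by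
      apply Subgroup.eq_of_le_of_card_ge hker_le
      rw [h, hnormcard]
    have : (Subgroup.normalizer (P : Set H)).Normal := heq ▸ MonoidHom.normal_ker φ
    exact hP (Sylow.normal_of_normalizer_normal P this)
  -- identify `Perm (Sylow 3 H)` with `Perm (Fin 4)`
  have : Fintype (Sylow 3 H) := Fintype.ofFinite _
  have e : Sylow 3 H ≃ Fin 4 := by
    apply Fintype.equivFinOfCardEq
    rw [← Nat.card_eq_fintype_card, hn4]
  set ψ := (permCongrMulEquiv e).toMonoidHom.comp φ with hψ
  have hkerψ : ψ.ker = φ.ker := by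
    ext x
    simp only [hψ, MonoidHom.mem_ker, MonoidHom.comp_apply, MulEquiv.coe_toMonoidHom]
    constructor
    · intro hx
      exact (permCongrMulEquiv e).injective (by rw [map_one]; exact hx)
    · intro hx; rw [hx, map_one]
  have hcardperm : Nat.card (Equiv.Perm (Fin 4)) = 24 := by
    simp [Nat.card_eq_fintype_card, Fintype.card_perm, Nat.factorial]
  -- kernel has order 1 or 2
  have hk12 : Nat.card φ.ker = 1 ∨ Nat.card φ.ker = 2 := by
    have h1 := Nat.le_of_dvd (by norm_num) hkdvd
    have h0 : Nat.card φ.ker ≠ 0 := Nat.card_pos.ne'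
    interval_cases h : (Nat.card φ.ker) <;> omega
  rcases hk12 with hk1 | hk2
  · -- trivial kernel: ψ is an isomorphism
    have hker : ψ.ker = ⊥ := by
      rw [hkerψ]
      exact Subgroup.eq_bot_of_card_eq _ hk1
    have hinj : Function.Injective ψ := (MonoidHom.ker_eq_bot_iff ψ).mp hker
    have : Fintype H := Fintype.ofFinite _
    have hbij : Function.Bijective ψ := by
      rw [Fintype.bijective_iff_injective_and_card]
      refine ⟨hinj, ?_⟩
      rw [← Nat.card_eq_fintype_card, ← Nat.card_eq_fintype_card, hcard, hcardperm]
    exact ⟨MulEquiv.ofBijective ψ hbij⟩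
  · -- kernel of order 2: contradiction with generation by involutions
    exfalso
    -- step 1: every element maps to an even permutation
    have hsign : ∀ h : H, Equiv.Perm.sign (ψ h) = 1 := by
      by_contra hcon
      push_neg at hcon
      obtain ⟨h0, hh0⟩ := hcon
      have hh0' : Equiv.Perm.sign (ψ h0) = -1 := by
        rcases Int.units_eq_one_or (Equiv.Perm.sign (ψ h0)) with h | h
        · exact absurd h hh0
        · exact h
      set χ := (Equiv.Perm.sign (α := Fin 4)).comp ψ with hχ
      have hrange : χ.range = ⊤ := by
        rw [eq_top_iff]
        intro u _
        rw [MonoidHom.mem_range]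
        rcases Int.units_eq_one_or u with h | h
        · exact ⟨1, by rw [map_one, h]⟩
        · exact ⟨h0, by rw [h]; exact hh0'⟩
      have hMcard : Nat.card χ.ker = 12 := by
        have h1 : Nat.card (H ⧸ χ.ker) = Nat.card χ.range :=
          Nat.card_congr (QuotientGroup.quotientKerEquivRange χ).toEquiv
        have h2 : Nat.card χ.range = 2 := by
          rw [hrange]
          rw [Nat.card_congr (Subgroup.topEquiv.toEquiv)]
          simp [Nat.card_eq_fintype_card]
        have h3 := Subgroup.card_eq_card_quotient_mul_card_subgroup χ.ker
        rw [hcard, h1, h2] at h3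
        omega
      have hkle : φ.ker ≤ χ.ker := by
        intro x hx
        have hx' : ψ x = 1 := by rw [← hkerψ] at hx; exact hx
        show Equiv.Perm.sign (ψ x) = 1
        rw [hx', map_one]
      set f := ψ.comp χ.ker.subtype with hf
      have hkerf : f.ker = φ.ker.subgroupOf χ.ker := by
        ext x
        simp only [hf, MonoidHom.mem_ker, MonoidHom.comp_apply, Subgroup.coe_subtype,
          Subgroup.mem_subgroupOf]
        rw [← MonoidHom.mem_ker, ← MonoidHom.mem_ker, hkerψ]
      have hckerf : Nat.card f.ker = 2 := by
        rw [hkerf, Nat.card_congr (Subgroup.subgroupOfEquivOfLe hkle).toEquiv, hk2]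
      have hcrange : Nat.card f.range = 6 := by
        have h1 : Nat.card (χ.ker ⧸ f.ker) = Nat.card f.range :=
          Nat.card_congr (QuotientGroup.quotientKerEquivRange f).toEquiv
        have h2 := Subgroup.card_eq_card_quotient_mul_card_subgroup f.ker
        rw [hMcard, h1, hckerf] at h2
        omega
      apply aux6 hcrange f.range.subtype (Subgroup.subtype_injective _)
      rintro ⟨m, x, rfl⟩
      show Equiv.Perm.sign (ψ (χ.ker.subtype x)) = 1
      exact x.2
    -- step 2: all involutions land in the Klein four subgroup
    have hsub : {g : H | orderOf g = 2} ⊆ ↑(K4.comap ψ) := by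
      intro g hg
      have hg2 : g ^ 2 = 1 := by rw [← hg]; exact pow_orderOf_eq_one g
      refine Subgroup.mem_comap.mpr ⟨?_, hsign g⟩
      rw [← map_pow, hg2, map_one]
    have htop : K4.comap ψ = ⊤ := by
      rw [eq_top_iff, ← hgen]
      exact (Subgroup.closure_le _).mpr hsub
    -- step 3: an element of order 3 gives a contradiction
    have : Fintype H := Fintype.ofFinite _
    obtain ⟨x, hx⟩ := exists_prime_orderOf_dvd_card (G := H) 3
      (by rw [← Nat.card_eq_fintype_card, hcard]; norm_num)
    have hxk : ψ x ∈ K4 := Subgroup.mem_comap.mp (htop ▸ Subgroup.mem_top x)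
    have h2 : (ψ x)^2 = 1 := hxk.1
    have h3 : (ψ x)^3 = 1 := by rw [← map_pow, ← hx, pow_orderOf_eq_one, map_one]
    have h1 : ψ x = 1 := by
      have : ψ x = (ψ x)^3 * ((ψ x)^2)⁻¹ := by group
      rw [h2, h3] at this; simpa using this
    have hxker : x ∈ φ.ker := by rw [← hkerψ]; exact MonoidHom.mem_ker.mpr h1
    have hdvd2 : orderOf x ∣ 2 := by
      have h5 : orderOf (⟨x, hxker⟩ : φ.ker) = orderOf x := by
        rw [← orderOf_injective φ.ker.subtype (Subgroup.subtype_injective _) ⟨x, hxker⟩]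
        rfl
      rw [← h5, ← hk2]
      exact orderOf_dvd_natCard _
    rw [hx] at hdvd2
    norm_num at hdvd2
end

section
/- The group $H = \langle x,y,s,t \mid x^2, y^2, s^2, t^2, (xy)^2, (st)^2, (yt)^2, (xyt)^3, (sty)^3, (xyst)^2 \rangle$ is isomorphic to $D_6 \times D_6$ (direct product of two dihedral groups of order $6$), and hence has order $36$. -/
namespace Stmt19

/-- Generators: `0 ↦ x`, `1 ↦ y`, `2 ↦ s`, `3 ↦ t`. -/
def X : FreeGroup (Fin 4) := FreeGroup.of 0
def Y : FreeGroup (Fin 4) := FreeGroup.of 1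
def S : FreeGroup (Fin 4) := FreeGroup.of 2
def T : FreeGroup (Fin 4) := FreeGroup.of 3

/-- Relators of `H = ⟨x,y,s,t | x²,y²,s²,t²,(xy)²,(st)²,(yt)²,(xyt)³,(sty)³,(xyst)²⟩`. -/
def rels : Set (FreeGroup (Fin 4)) :=
  {X ^ 2, Y ^ 2, S ^ 2, T ^ 2, (X * Y) ^ 2, (S * T) ^ 2, (Y * T) ^ 2,
    (X * Y * T) ^ 3, (S * T * Y) ^ 3, (X * Y * S * T) ^ 2}

open DihedralGroup


abbrev D3 := DihedralGroup 3

def a : FreeGroup (Fin 2) := FreeGroup.of 0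
def b : FreeGroup (Fin 2) := FreeGroup.of 1
def drels : Set (FreeGroup (Fin 2)) := {a ^ 3, b ^ 2, (b * a) ^ 2}
abbrev Pd := PresentedGroup drels

def dv : Fin 2 → D3 := ![r 1, sr 0]

theorem hdv : ∀ w ∈ drels, FreeGroup.lift dv w = 1 := by
  intro w hw
  rcases hw with rfl | rfl | rfl <;>
    simp [a, b, dv, map_pow, map_mul] <;> decide

def θfwd : Pd →* D3 := PresentedGroup.toGroup hdv

-- relator lemma
theorem relPd : ∀ w ∈ drels, PresentedGroup.mk drels w = 1 := by
  intro w hw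
  exact (QuotientGroup.eq_one_iff w).mpr (Subgroup.subset_normalClosure hw)



local notation "α" => (PresentedGroup.of (rels := drels) 0)
local notation "β" => (PresentedGroup.of (rels := drels) 1)

theorem ha3 : α * α * α = 1 := by
  have := relPd (a ^ 3) (by simp [drels])
  simpa [a, pow_succ, PresentedGroup.of] using this

theorem hb2 : β * β = 1 := by
  have := relPd (b ^ 2) (by simp [drels])
  simpa [b, pow_two, PresentedGroup.of] using this

theorem hba2 : (β * α) * (β * α) = 1 := by
  have := relPd ((b * a) ^ 2) (by simp [drels])
  simpa [a, b, pow_two, mul_assoc, PresentedGroup.of] using this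

theorem hainv : α⁻¹ = α * α := inv_eq_of_mul_eq_one_right (by rw [← mul_assoc]; exact ha3)
theorem hbinv : β⁻¹ = β := inv_eq_of_mul_eq_one_right hb2

theorem sa0 : α * (α * α) = 1 := by rw [← mul_assoc]; exact ha3
theorem sa1 (g : Pd) : α * (α * (α * g)) = g := by
  rw [← mul_assoc, ← mul_assoc, ha3, one_mul]
theorem sb0 : β * β = 1 := hb2
theorem sb1 (g : Pd) : β * (β * g) = g := by rw [← mul_assoc, hb2, one_mul]
theorem sba0 : β * α = α * (α * β) := by
  have h1 : (β * α)⁻¹ = β * α := inv_eq_of_mul_eq_one_right hba2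
  calc β * α = (β * α)⁻¹ := h1.symm
    _ = α⁻¹ * β⁻¹ := by rw [mul_inv_rev]
    _ = α * (α * β) := by rw [hainv, hbinv, mul_assoc]
theorem sba1 (g : Pd) : β * (α * g) = α * (α * (β * g)) := by
  rw [← mul_assoc, sba0]; simp [mul_assoc]

def k : Fin 3 × Fin 2 → Pd := fun p => α ^ (p.1 : ℕ) * β ^ (p.2 : ℕ)

theorem k_surj : Function.Surjective k := by
  have key : ∀ w : FreeGroup (Fin 2), ∀ g ∈ Set.range k,
      PresentedGroup.mk drels w * g ∈ Set.range k := by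
    intro w
    induction w using FreeGroup.induction_on with
    | C1 => intro g hg; simpa using hg
    | of i =>
      rintro g ⟨⟨i', j⟩, rfl⟩
      have hcase : PresentedGroup.mk drels (FreeGroup.of i) = α ∨
          PresentedGroup.mk drels (FreeGroup.of i) = β := by
        rcases i with ⟨iv, hv⟩; interval_cases iv
        · exact Or.inl rfl
        · exact Or.inr rfl
      rcases hcase with h | h <;> rw [h]
      · fin_cases i' <;> fin_cases j
        · exact ⟨(1, 0), by simp [k, pow_succ, mul_assoc, sa0, sa1, sb0, sb1, sba0, sba1]⟩
        · exact ⟨(1, 1), by simp [k, pow_succ, mul_assoc, sa0, sa1, sb0, sb1, sba0, sba1]⟩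
        · exact ⟨(2, 0), by simp [k, pow_succ, mul_assoc, sa0, sa1, sb0, sb1, sba0, sba1]⟩
        · exact ⟨(2, 1), by simp [k, pow_succ, mul_assoc, sa0, sa1, sb0, sb1, sba0, sba1]⟩
        · exact ⟨(0, 0), by simp [k, pow_succ, mul_assoc, sa0, sa1, sb0, sb1, sba0, sba1]⟩
        · exact ⟨(0, 1), by simp [k, pow_succ, mul_assoc, sa0, sa1, sb0, sb1, sba0, sba1]⟩
      · fin_cases i' <;> fin_cases j
        · exact ⟨(0, 1), by simp [k, pow_succ, mul_assoc, sa0, sa1, sb0, sb1, sba0, sba1]⟩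
        · exact ⟨(0, 0), by simp [k, pow_succ, mul_assoc, sa0, sa1, sb0, sb1, sba0, sba1]⟩
        · exact ⟨(2, 1), by simp [k, pow_succ, mul_assoc, sa0, sa1, sb0, sb1, sba0, sba1]⟩
        · exact ⟨(2, 0), by simp [k, pow_succ, mul_assoc, sa0, sa1, sb0, sb1, sba0, sba1]⟩
        · exact ⟨(1, 1), by simp [k, pow_succ, mul_assoc, sa0, sa1, sb0, sb1, sba0, sba1]⟩
        · exact ⟨(1, 0), by simp [k, pow_succ, mul_assoc, sa0, sa1, sb0, sb1, sba0, sba1]⟩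
    | inv_of i hi =>
      intro g hg
      have hcase : PresentedGroup.mk drels (FreeGroup.of i) = α ∨
          PresentedGroup.mk drels (FreeGroup.of i) = β := by
        rcases i with ⟨iv, hv⟩; interval_cases iv
        · exact Or.inl rfl
        · exact Or.inr rfl
      rw [map_inv]
      rcases hcase with h | h <;> rw [h] at hi ⊢
      · rw [hainv, mul_assoc]
        exact hi _ (hi _ hg)
      · rw [hbinv]
        exact hi _ hg
    | mul w1 w2 h1 h2 =>
      intro g hg
      rw [map_mul, mul_assoc]
      exact h1 _ (h2 g hg)
  intro g
  obtain ⟨w, rfl⟩ := PresentedGroup.mk_surjective drels g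
  have := key w 1 ⟨(0, 0), by simp [k]⟩
  simpa using this



theorem θfwd_surj : Function.Surjective θfwd := by
  rintro (i | i)
  · refine ⟨PresentedGroup.of 0 ^ (i.val : ℕ), ?_⟩
    simp [θfwd, PresentedGroup.toGroup.of, dv, map_pow, r_one_pow]
  · refine ⟨PresentedGroup.of 1 * PresentedGroup.of 0 ^ (i.val : ℕ), ?_⟩
    simp [θfwd, PresentedGroup.toGroup.of, dv, map_pow, map_mul, r_one_pow]

instance : Finite Pd := Finite.of_surjective k k_surj

theorem θfwd_bij : Function.Bijective θfwd := by
  refine θfwd_surj.bijective_of_nat_card_le ?_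
  have h1 := Nat.card_le_card_of_surjective k k_surj
  simp only [Nat.card_eq_fintype_card, Fintype.card_prod, Fintype.card_fin] at h1
  have h2 : Nat.card D3 = 6 := by
    rw [Nat.card_eq_fintype_card, DihedralGroup.card]
  omega

noncomputable def θ : Pd ≃* D3 := MulEquiv.ofBijective θfwd θfwd_bij

theorem θ_of0 : θ (PresentedGroup.of 0) = r 1 := by
  simp [θ, MulEquiv.ofBijective, θfwd, PresentedGroup.toGroup.of, dv]

theorem θ_of1 : θ (PresentedGroup.of 1) = sr 0 := by
  simp [θ, MulEquiv.ofBijective, θfwd, PresentedGroup.toGroup.of, dv]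

theorem θ_symm_sr0 : θ.symm (sr 0) = PresentedGroup.of 1 := by
  rw [MulEquiv.symm_apply_eq, θ_of1]

theorem θ_symm_sr1 : θ.symm (sr 1) = PresentedGroup.of 1 * PresentedGroup.of 0 := by
  rw [MulEquiv.symm_apply_eq, map_mul, θ_of1, θ_of0]
  decide

theorem θ_symm_one : θ.symm 1 = 1 := map_one _




abbrev H := PresentedGroup rels


local notation "x" => (PresentedGroup.of (rels := rels) 0)
local notation "y" => (PresentedGroup.of (rels := rels) 1)
local notation "s" => (PresentedGroup.of (rels := rels) 2)
local notation "t" => (PresentedGroup.of (rels := rels) 3)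

theorem relH : ∀ w ∈ rels, PresentedGroup.mk rels w = 1 := by
  intro w hw
  exact (QuotientGroup.eq_one_iff w).mpr (Subgroup.subset_normalClosure hw)

theorem hx2 : x * x = 1 := by
  have := relH (X ^ 2) (by simp [rels]); simpa [X, pow_two, PresentedGroup.of] using this
theorem hy2 : y * y = 1 := by
  have := relH (Y ^ 2) (by simp [rels]); simpa [Y, pow_two, PresentedGroup.of] using this
theorem hs2 : s * s = 1 := by
  have := relH (S ^ 2) (by simp [rels]); simpa [S, pow_two, PresentedGroup.of] using this
theorem ht2 : t * t = 1 := by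
  have := relH (T ^ 2) (by simp [rels]); simpa [T, pow_two, PresentedGroup.of] using this
theorem hxy2 : (x * y) * (x * y) = 1 := by
  have := relH ((X * Y) ^ 2) (by simp [rels]); simpa [X, Y, pow_two, PresentedGroup.of] using this
theorem hst2 : (s * t) * (s * t) = 1 := by
  have := relH ((S * T) ^ 2) (by simp [rels]); simpa [S, T, pow_two, PresentedGroup.of] using this
theorem hyt2 : (y * t) * (y * t) = 1 := by
  have := relH ((Y * T) ^ 2) (by simp [rels]); simpa [Y, T, pow_two, PresentedGroup.of] using this
theorem hxyt3 : (x * y * t) ^ 3 = 1 := by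
  have := relH ((X * Y * T) ^ 3) (by simp [rels]); simpa [X, Y, T, PresentedGroup.of] using this
theorem hsty3 : (s * t * y) ^ 3 = 1 := by
  have := relH ((S * T * Y) ^ 3) (by simp [rels]); simpa [S, T, Y, PresentedGroup.of] using this
theorem hxyst2 : ((x * y) * (s * t)) * ((x * y) * (s * t)) = 1 := by
  have := relH ((X * Y * S * T) ^ 2) (by simp [rels]); simpa [X, Y, S, T, pow_two, mul_assoc, PresentedGroup.of] using this

/-- commuting from involutions -/
theorem comm_aux {G : Type*} [Group G] {u v : G} (hu : u * u = 1) (hv : v * v = 1)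
    (huv : (u * v) * (u * v) = 1) : u * v = v * u := by
  have h1 : (u * v)⁻¹ = u * v := inv_eq_of_mul_eq_one_right huv
  calc u * v = (u * v)⁻¹ := h1.symm
    _ = v⁻¹ * u⁻¹ := by rw [mul_inv_rev]
    _ = v * u := by rw [inv_eq_of_mul_eq_one_right hu, inv_eq_of_mul_eq_one_right hv]

theorem comm_xy : x * y = y * x := comm_aux hx2 hy2 hxy2
theorem comm_st : s * t = t * s := comm_aux hs2 ht2 hst2
theorem comm_yt : y * t = t * y := comm_aux hy2 ht2 hyt2
theorem comm_PQ : (x * y) * (s * t) = (s * t) * (x * y) :=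
  comm_aux hxy2 hst2 hxyst2

-- abbreviations
noncomputable def A : H := x * y * t
noncomputable def P : H := x * y
noncomputable def B : H := s * t * y
noncomputable def Q : H := s * t

theorem hP2 : P * P = 1 := hxy2
theorem hQ2 : Q * Q = 1 := hst2
theorem hA3 : A ^ 3 = 1 := hxyt3
theorem hB3 : B ^ 3 = 1 := hsty3

theorem hPA : P * A = t := by
  show (x * y) * ((x * y) * t) = t
  rw [← mul_assoc, hxy2, one_mul]

theorem hQB : Q * B = y := by
  show (s * t) * ((s * t) * y) = y
  rw [← mul_assoc, hst2, one_mul]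

theorem hPy : P * y = x := by
  show x * y * y = x
  rw [mul_assoc, hy2, mul_one]

theorem htQ : t * Q = s := by
  show t * (s * t) = s
  rw [comm_st, ← mul_assoc, ht2, one_mul]

theorem comm_Py : P * y = y * P := by
  show (x * y) * y = y * (x * y)
  rw [mul_assoc, hy2, mul_one, ← mul_assoc, ← comm_xy, mul_assoc, hy2, mul_one]

theorem comm_tQ : t * Q = Q * t := by
  have r : Q * t = s := by show (s * t) * t = s; rw [mul_assoc, ht2, mul_one]
  rw [htQ, r]




noncomputable def lift1 : Pd →* H :=
  PresentedGroup.toGroup (f := ![A, P]) (by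
    intro w hw
    rcases hw with rfl | rfl | rfl
    · simpa [a, map_pow] using hA3
    · have : P ^ 2 = 1 := by rw [pow_two]; exact hP2
      simpa [b, map_pow] using this
    · have : (P * A) ^ 2 = 1 := by rw [hPA, pow_two]; exact ht2
      simpa [a, b, map_pow, map_mul] using this)

noncomputable def lift2 : Pd →* H :=
  PresentedGroup.toGroup (f := ![B, Q]) (by
    intro w hw
    rcases hw with rfl | rfl | rfl
    · simpa [a, map_pow] using hB3
    · have : Q ^ 2 = 1 := by rw [pow_two]; exact hQ2
      simpa [b, map_pow] using this
    · have : (Q * B) ^ 2 = 1 := by rw [hQB, pow_two]; exact hy2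
      simpa [a, b, map_pow, map_mul] using this)

theorem lift1_of0 : lift1 (PresentedGroup.of 0) = A := PresentedGroup.toGroup.of _
theorem lift1_of1 : lift1 (PresentedGroup.of 1) = P := PresentedGroup.toGroup.of _
theorem lift2_of0 : lift2 (PresentedGroup.of 0) = B := PresentedGroup.toGroup.of _
theorem lift2_of1 : lift2 (PresentedGroup.of 1) = Q := PresentedGroup.toGroup.of _

theorem lift1_mem (p : Pd) : lift1 p ∈ Subgroup.closure {A, P} := by
  have h := PresentedGroup.closure_range_of drels
  have hp : p ∈ Subgroup.closure (Set.range (PresentedGroup.of (rels := drels))) := by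
    rw [h]; trivial
  have hmem : lift1 p ∈
      (Subgroup.closure (Set.range (PresentedGroup.of (rels := drels)))).map lift1 :=
    ⟨p, hp, rfl⟩
  rw [MonoidHom.map_closure] at hmem
  refine Subgroup.closure_mono ?_ hmem
  rintro _ ⟨_, ⟨i, rfl⟩, rfl⟩
  rcases i with ⟨iv, hv⟩; interval_cases iv
  · exact Or.inl lift1_of0
  · exact Or.inr lift1_of1

theorem lift2_mem (p : Pd) : lift2 p ∈ Subgroup.closure {B, Q} := by
  have h := PresentedGroup.closure_range_of drels
  have hp : p ∈ Subgroup.closure (Set.range (PresentedGroup.of (rels := drels))) := by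
    rw [h]; trivial
  have hmem : lift2 p ∈
      (Subgroup.closure (Set.range (PresentedGroup.of (rels := drels)))).map lift2 :=
    ⟨p, hp, rfl⟩
  rw [MonoidHom.map_closure] at hmem
  refine Subgroup.closure_mono ?_ hmem
  rintro _ ⟨_, ⟨i, rfl⟩, rfl⟩
  rcases i with ⟨iv, hv⟩; interval_cases iv
  · exact Or.inl lift2_of0
  · exact Or.inr lift2_of1

theorem commPQ : Commute P Q := comm_PQ
theorem commPy : Commute P y := comm_Py
theorem commtQ : Commute t Q := comm_tQ
theorem commty : Commute t y := (comm_yt).symm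

theorem commAB : Commute A B :=
  Commute.mul_left (Commute.mul_right commPQ commPy) (Commute.mul_right commtQ commty)
theorem commAQ : Commute A Q := Commute.mul_left commPQ commtQ
theorem commPB : Commute P B := Commute.mul_right commPQ commPy

theorem comm_closure : ∀ u ∈ Subgroup.closure ({A, P} : Set H),
    ∀ v ∈ Subgroup.closure ({B, Q} : Set H), Commute u v := by
  have step1 : Subgroup.closure ({A, P} : Set H) ≤ Subgroup.centralizer {B, Q} := by
    rw [Subgroup.closure_le]
    rintro u (rfl | rfl) <;> rw [SetLike.mem_coe, Subgroup.mem_centralizer_iff] <;>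
      rintro h (rfl | rfl)
    · exact commAB.symm
    · exact commAQ.symm
    · exact commPB.symm
    · exact commPQ.symm
  intro u hu v hv
  have h2 := step1 hu
  rw [Subgroup.mem_centralizer_iff] at h2
  have step2 : Subgroup.closure ({B, Q} : Set H) ≤ Subgroup.centralizer {u} := by
    rw [Subgroup.closure_le]
    rintro g (rfl | rfl) <;> rw [SetLike.mem_coe, Subgroup.mem_centralizer_iff] <;>
      rintro h rfl
    · exact (h2 _ (Or.inl rfl)).symm
    · exact (h2 _ (Or.inr rfl)).symm
  have h3 := step2 hv
  rw [Subgroup.mem_centralizer_iff] at h3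
  exact h3 u rfl

noncomputable def ψ1 : D3 →* H := lift1.comp θ.symm.toMonoidHom
noncomputable def ψ2 : D3 →* H := lift2.comp θ.symm.toMonoidHom

theorem hψcomm : ∀ m n, Commute (ψ1 m) (ψ2 n) := fun m n =>
  comm_closure _ (lift1_mem _) _ (lift2_mem _)

noncomputable def ψ : D3 × D3 →* H := MonoidHom.noncommCoprod ψ1 ψ2 hψcomm

def v : Fin 4 → D3 × D3 := ![(sr 0, sr 1), (1, sr 1), (sr 1, sr 0), (sr 1, 1)]

noncomputable def φ : H →* D3 × D3 :=
  PresentedGroup.toGroup (f := v) (by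
    intro w hw
    rcases hw with rfl | rfl | rfl | rfl | rfl | rfl | rfl | rfl | rfl | rfl <;>
      simp [X, Y, S, T, v, map_pow, map_mul] <;> decide)

theorem φ_of (i : Fin 4) : φ (PresentedGroup.of i) = v i := PresentedGroup.toGroup.of _

theorem key1 : ∀ p : Pd, φ (lift1 p) = ((θ p : D3), 1) := by
  have h : φ.comp lift1 = (MonoidHom.inl D3 D3).comp θ.toMonoidHom := by
    refine PresentedGroup.ext fun i => ?_
    rcases i with ⟨iv, hv⟩; interval_cases iv
    · show φ (lift1 (PresentedGroup.of 0)) = (MonoidHom.inl D3 D3) (θ (PresentedGroup.of 0))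
      rw [lift1_of0, θ_of0]
      show φ (x * y * t) = (r 1, 1)
      rw [map_mul, map_mul, φ_of, φ_of, φ_of]
      decide
    · show φ (lift1 (PresentedGroup.of 1)) = (MonoidHom.inl D3 D3) (θ (PresentedGroup.of 1))
      rw [lift1_of1, θ_of1]
      show φ (x * y) = (sr 0, 1)
      rw [map_mul, φ_of, φ_of]
      decide
  intro p
  have := DFunLike.congr_fun h p
  simpa using this

theorem key2 : ∀ p : Pd, φ (lift2 p) = (1, (θ p : D3)) := by
  have h : φ.comp lift2 = (MonoidHom.inr D3 D3).comp θ.toMonoidHom := by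
    refine PresentedGroup.ext fun i => ?_
    rcases i with ⟨iv, hv⟩; interval_cases iv
    · show φ (lift2 (PresentedGroup.of 0)) = (MonoidHom.inr D3 D3) (θ (PresentedGroup.of 0))
      rw [lift2_of0, θ_of0]
      show φ (s * t * y) = (1, r 1)
      rw [map_mul, map_mul, φ_of, φ_of, φ_of]
      decide
    · show φ (lift2 (PresentedGroup.of 1)) = (MonoidHom.inr D3 D3) (θ (PresentedGroup.of 1))
      rw [lift2_of1, θ_of1]
      show φ (s * t) = (1, sr 0)
      rw [map_mul, φ_of, φ_of]
      decide
  intro p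
  have := DFunLike.congr_fun h p
  simpa using this

theorem right_inv : ∀ g : D3 × D3, φ (ψ g) = g := by
  rintro ⟨m, n⟩
  have : ψ (m, n) = ψ1 m * ψ2 n := rfl
  rw [this, map_mul]
  show φ (lift1 (θ.symm m)) * φ (lift2 (θ.symm n)) = (m, n)
  rw [key1, key2, MulEquiv.apply_symm_apply, MulEquiv.apply_symm_apply]
  ext <;> simp

theorem ψ1_sr0 : ψ1 (sr 0) = P := by
  show lift1 (θ.symm (sr 0)) = P
  rw [θ_symm_sr0, lift1_of1]

theorem ψ1_sr1 : ψ1 (sr 1) = P * A := by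
  show lift1 (θ.symm (sr 1)) = P * A
  rw [θ_symm_sr1, map_mul, lift1_of1, lift1_of0]

theorem ψ2_sr0 : ψ2 (sr 0) = Q := by
  show lift2 (θ.symm (sr 0)) = Q
  rw [θ_symm_sr0, lift2_of1]

theorem ψ2_sr1 : ψ2 (sr 1) = Q * B := by
  show lift2 (θ.symm (sr 1)) = Q * B
  rw [θ_symm_sr1, map_mul, lift2_of1, lift2_of0]

theorem left_inv : ∀ h : H, ψ (φ h) = h := by
  have h : ψ.comp φ = MonoidHom.id H := by
    refine PresentedGroup.ext fun i => ?_
    rcases i with ⟨iv, hv⟩; interval_cases iv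
    · show ψ (φ x) = x
      rw [φ_of]
      show ψ1 (sr 0) * ψ2 (sr 1) = x
      rw [ψ1_sr0, ψ2_sr1, hQB, hPy]
    · show ψ (φ y) = y
      rw [φ_of]
      show ψ1 1 * ψ2 (sr 1) = y
      rw [map_one, one_mul, ψ2_sr1, hQB]
    · show ψ (φ s) = s
      rw [φ_of]
      show ψ1 (sr 1) * ψ2 (sr 0) = s
      rw [ψ1_sr1, ψ2_sr0, hPA, htQ]
    · show ψ (φ t) = t
      rw [φ_of]
      show ψ1 (sr 1) * ψ2 1 = t
      rw [map_one, mul_one, ψ1_sr1, hPA]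
  intro g
  exact DFunLike.congr_fun h g

noncomputable def e : H ≃* D3 × D3 :=
  { toFun := φ, invFun := ψ, left_inv := left_inv, right_inv := right_inv,
    map_mul' := φ.map_mul }

/-- The presented group `H` is isomorphic to `D₆ × D₆` and has order `36`. -/
theorem stmt_19 :
    Nonempty (PresentedGroup rels ≃* (DihedralGroup 3 × DihedralGroup 3)) ∧
    Nat.card (PresentedGroup rels) = 36 := by
  refine ⟨⟨e⟩, ?_⟩
  rw [Nat.card_congr e.toEquiv, Nat.card_eq_fintype_card, Fintype.card_prod,
    DihedralGroup.card]


end Stmt19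
end
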